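/- Fix λ, μ > 0 and p > 0. The map λᵢ ↦ e^{−(λ+μ)p} + (λ+μ)/(a−b)·(e^{ap} − e^{bp}), where a, b are the roots of s² + (λ+μ)s + λᵢμ = 0, is strictly convex on the interval of λᵢ ∈ (0, λ] where (λ+μ)² > 4λᵢμ. -/

import Mathlib

noncomputable def PP (lam mu p li : ℝ) : ℝ :=
  let D := Real.sqrt ((lam + mu)^2 - 4 * li * mu)
  let a := (-(lam + mu) + D)/2
  let b := (-(lam + mu) - D)/2
  Real.exp (-(lam + mu) * p) + (lam + mu) / (a - b) * (Real.exp (a * p) - Real.exp (b * p))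

lemma key_poly (x : ℝ) (hx : 0 < x) :
    x^2 + 3*x + 3 < (x^2 - 3*x + 3) * Real.exp (2*x) := by
  have hq : 0 < x^2 - 3*x + 3 := by nlinarith [sq_nonneg (x - 3/2)]
  have hS := Real.sum_le_exp_of_nonneg (show (0:ℝ) ≤ 2*x by linarith) 8
  have hexp := mul_le_mul_of_nonneg_left hS hq.le
  have hid : (x^2-3*x+3) * (∑ i ∈ Finset.range 8, (2*x)^i / (Nat.factorial i))
      = (x^2+3*x+3) + x^5*(2/15 + 2/15*x + 8/105*x^2 + 4/315*x^3 + 8/315*x^4) := by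
    simp [Finset.sum_range_succ, Nat.factorial]
    ring
  have hpos : 0 < x^5*(2/15 + 2/15*x + 8/105*x^2 + 4/315*x^3 + 8/315*x^4) := by positivity
  nlinarith [hexp, hid, hpos]

lemma key_ineq (x : ℝ) (hx : 0 < x) :
    3*x*(Real.exp x + Real.exp (-x)) < (x^2 + 3) * (Real.exp x - Real.exp (-x)) := by
  have hE := Real.exp_pos x
  have hne : Real.exp x ≠ 0 := hE.ne'
  have key2 : (x^2+3)*(Real.exp x - (Real.exp x)⁻¹) - 3*x*(Real.exp x + (Real.exp x)⁻¹)
      = ((x^2-3*x+3)*(Real.exp x)^2 - (x^2+3*x+3))/Real.exp x := by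
    field_simp
    ring
  rw [Real.exp_neg, ← sub_pos, key2]
  apply div_pos ?_ hE
  have h2 : Real.exp (2*x) = Real.exp x ^ 2 := by
    rw [two_mul, Real.exp_add]; ring
  have := key_poly x hx
  rw [h2] at this
  linarith

noncomputable def Fd (t u : ℝ) : ℝ :=
  (Real.exp (t*Real.sqrt u) - Real.exp (-(t*Real.sqrt u))) / Real.sqrt u

noncomputable def Fd1 (t u : ℝ) : ℝ :=
  (t*Real.sqrt u*(Real.exp (t*Real.sqrt u) + Real.exp (-(t*Real.sqrt u)))
    - (Real.exp (t*Real.sqrt u) - Real.exp (-(t*Real.sqrt u)))) / (2*u*Real.sqrt u)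

noncomputable def Fd2 (t u : ℝ) : ℝ :=
  (t^2*u*(Real.exp (t*Real.sqrt u) - Real.exp (-(t*Real.sqrt u)))
    - 3*t*Real.sqrt u*(Real.exp (t*Real.sqrt u) + Real.exp (-(t*Real.sqrt u)))
    + 3*(Real.exp (t*Real.sqrt u) - Real.exp (-(t*Real.sqrt u)))) / (4*u^2*Real.sqrt u)

lemma hasDeriv_Fd (t : ℝ) {u : ℝ} (hu : 0 < u) : HasDerivAt (Fd t) (Fd1 t u) u := by
  have hs : 0 < Real.sqrt u := Real.sqrt_pos.2 hu
  have hss : Real.sqrt u * Real.sqrt u = u := Real.mul_self_sqrt hu.le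
  have hsq : HasDerivAt Real.sqrt (1/(2*Real.sqrt u)) u := Real.hasDerivAt_sqrt hu.ne'
  have hEp : HasDerivAt (fun v => Real.exp (t*Real.sqrt v))
      (Real.exp (t*Real.sqrt u) * (t*(1/(2*Real.sqrt u)))) u := (hsq.const_mul t).exp
  have hEm : HasDerivAt (fun v => Real.exp (-(t*Real.sqrt v)))
      (Real.exp (-(t*Real.sqrt u)) * (-(t*(1/(2*Real.sqrt u))))) u := ((hsq.const_mul t).neg).exp
  have h := (hEp.sub hEm).div hsq hs.ne'
  refine (h.congr_deriv ?_).congr_of_eventuallyEq (Filter.Eventually.of_forall fun _ => rfl)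
  symm
  unfold Fd1
  rw [← hss]
  set s := Real.sqrt u with hsdef
  field_simp
  simp only [Real.sqrt_sq hs.le, Pi.sub_apply]
  ring

lemma hasDeriv_Fd1 (t : ℝ) {u : ℝ} (hu : 0 < u) : HasDerivAt (Fd1 t) (Fd2 t u) u := by
  have hs : 0 < Real.sqrt u := Real.sqrt_pos.2 hu
  have hss : Real.sqrt u * Real.sqrt u = u := Real.mul_self_sqrt hu.le
  have hsq : HasDerivAt Real.sqrt (1/(2*Real.sqrt u)) u := Real.hasDerivAt_sqrt hu.ne'
  have hEp : HasDerivAt (fun v => Real.exp (t*Real.sqrt v))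
      (Real.exp (t*Real.sqrt u) * (t*(1/(2*Real.sqrt u)))) u := (hsq.const_mul t).exp
  have hEm : HasDerivAt (fun v => Real.exp (-(t*Real.sqrt v)))
      (Real.exp (-(t*Real.sqrt u)) * (-(t*(1/(2*Real.sqrt u))))) u := ((hsq.const_mul t).neg).exp
  have hN : HasDerivAt (fun v => t*Real.sqrt v*(Real.exp (t*Real.sqrt v) + Real.exp (-(t*Real.sqrt v)))
      - (Real.exp (t*Real.sqrt v) - Real.exp (-(t*Real.sqrt v))))
      ((t*(1/(2*Real.sqrt u)))*(Real.exp (t*Real.sqrt u) + Real.exp (-(t*Real.sqrt u)))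
        + t*Real.sqrt u*(Real.exp (t*Real.sqrt u) * (t*(1/(2*Real.sqrt u)))
          + Real.exp (-(t*Real.sqrt u)) * (-(t*(1/(2*Real.sqrt u)))))
        - (Real.exp (t*Real.sqrt u) * (t*(1/(2*Real.sqrt u)))
          - Real.exp (-(t*Real.sqrt u)) * (-(t*(1/(2*Real.sqrt u)))))) u :=
    (((hsq.const_mul t).mul (hEp.add hEm)).sub (hEp.sub hEm))
  have hDen : HasDerivAt (fun v => 2*v*Real.sqrt v)
      (2*Real.sqrt u + (2*u)*(1/(2*Real.sqrt u))) u := by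
    have := ((hasDerivAt_id u).const_mul 2).mul hsq
    exact this.congr_deriv (by simp)
  have hden_ne : 2*u*Real.sqrt u ≠ 0 := by positivity
  have h := hN.div hDen hden_ne
  refine (h.congr_deriv ?_).congr_of_eventuallyEq (Filter.Eventually.of_forall fun _ => rfl)
  symm
  unfold Fd2
  rw [← hss]
  set s := Real.sqrt u with hsdef
  field_simp
  simp only [Real.sqrt_sq hs.le, Pi.sub_apply]
  ring

lemma Fd_strictConvexOn (t : ℝ) (ht : 0 < t) : StrictConvexOn ℝ (Set.Ioi 0) (Fd t) := by
  apply strictConvexOn_of_deriv2_pos (convex_Ioi 0)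
  · intro u hu
    exact (hasDeriv_Fd t hu).continuousAt.continuousWithinAt
  · rw [interior_Ioi]
    intro u hu'
    have hu : (0:ℝ) < u := hu'
    have h1 : deriv (Fd t) =ᶠ[nhds u] Fd1 t := by
      filter_upwards [Ioi_mem_nhds hu] with v hv
      exact (hasDeriv_Fd t hv).deriv
    have h2 : deriv^[2] (Fd t) u = Fd2 t u := by
      show deriv (deriv (Fd t)) u = _
      rw [h1.deriv_eq]
      exact (hasDeriv_Fd1 t hu).deriv
    rw [h2]
    unfold Fd2
    have hs : 0 < Real.sqrt u := Real.sqrt_pos.2 hu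
    have hss : Real.sqrt u * Real.sqrt u = u := Real.mul_self_sqrt hu.le
    apply div_pos ?_ (mul_pos (by nlinarith [mul_pos hu hu] : (0:ℝ) < 4*u^2) hs)
    have hx : 0 < t * Real.sqrt u := mul_pos ht hs
    have hkey := key_ineq (t*Real.sqrt u) hx
    have ht2 : t^2*u = (t*Real.sqrt u)^2 := by rw [mul_pow, Real.sq_sqrt hu.le]
    rw [ht2]
    set x := t*Real.sqrt u with hxdef
    have hx3 : 3*t*Real.sqrt u = 3*x := by rw [hxdef]; ring
    rw [hx3]
    nlinarith [hkey]

lemma comp_affine_lemma {F : ℝ → ℝ} (hF : StrictConvexOn ℝ (Set.Ioi 0) F)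
    {E K m q : ℝ} (hK : 0 < K) (hm : m ≠ 0) {s : Set ℝ} (hs : Convex ℝ s)
    (hmap : ∀ x ∈ s, 0 < m*x+q) :
    StrictConvexOn ℝ s (fun x => E + K * F (m*x+q)) := by
  refine ⟨hs, fun x hx y hy hxy a b ha hb hab => ?_⟩
  have hne : m*x+q ≠ m*y+q := fun h => hxy (mul_left_cancel₀ hm (by linarith))
  have h2 := hF.2 (Set.mem_Ioi.2 (hmap x hx)) (Set.mem_Ioi.2 (hmap y hy)) hne ha hb hab
  simp only [smul_eq_mul] at h2 ⊢
  rw [show m*(a*x+b*y)+q = a*(m*x+q)+b*(m*y+q) from by linear_combination (-q)*hab]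
  have hE : a*E + b*E = E := by linear_combination E*hab
  nlinarith [mul_lt_mul_of_pos_left h2 hK, hE]

theorem PP_strictConvex (lam mu p : ℝ) (hlam : 0 < lam) (hmu : 0 < mu) (hp : 0 < p) :
    StrictConvexOn ℝ
      {li | li ∈ Set.Ioc 0 lam ∧ 4 * li * mu < (lam + mu)^2}
      (PP lam mu p) := by
  have hrw : PP lam mu p = fun li =>
      Real.exp (-(lam+mu)*p)
        + ((lam+mu) * Real.exp (-((lam+mu)*p)/2)) * Fd (p/2) (-(4*mu)*li + (lam+mu)^2) := by
    funext li
    have harg : -(4*mu)*li + (lam+mu)^2 = (lam+mu)^2 - 4*li*mu := by ring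
    simp only [PP, Fd, harg]
    set D := Real.sqrt ((lam+mu)^2 - 4*li*mu) with hD
    have e1 : (-(lam + mu) + D)/2 * p = -((lam+mu)*p)/2 + p/2*D := by ring
    have e2 : (-(lam + mu) - D)/2 * p = -((lam+mu)*p)/2 + -(p/2*D) := by ring
    rw [e1, e2, Real.exp_add, Real.exp_add]
    have e3 : (-(lam + mu) + D) / 2 - (-(lam + mu) - D) / 2 = D := by ring
    rw [e3]
    ring
  rw [hrw]
  have hconv : Convex ℝ {li | li ∈ Set.Ioc 0 lam ∧ 4 * li * mu < (lam + mu)^2} := by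
    have hset : {li | li ∈ Set.Ioc 0 lam ∧ 4 * li * mu < (lam + mu)^2}
        = Set.Ioc 0 lam ∩ Set.Iio ((lam+mu)^2/(4*mu)) := by
      ext z
      simp only [Set.mem_setOf_eq, Set.mem_inter_iff, Set.mem_Ioc, Set.mem_Iio]
      rw [lt_div_iff₀ (by positivity : (0:ℝ) < 4*mu)]
      constructor
      · rintro ⟨h1, h2⟩; exact ⟨h1, by linarith⟩
      · rintro ⟨h1, h2⟩; exact ⟨h1, by linarith⟩
    rw [hset]
    exact (convex_Ioc 0 lam).inter (convex_Iio _)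
  exact comp_affine_lemma (Fd_strictConvexOn (p/2) (by positivity))
    (by positivity) (neg_ne_zero.2 (by positivity)) hconv
    (fun x hx => by have := hx.2; linarith)
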